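/- Let μ ∈ ℝ and let c₀ : ℝ → ℂ be a Schwartz function. Define c(t,x) = (4πit)^{-1/2} e^{-iμt} ∫_ℝ e^{i(x-v)²/(4t)} c₀(v) dv for t > 0 and x ∈ ℝ, where (4πit)^{-1/2} is the principal branch of the square root. Then c is differentiable in t and twice differentiable in x on (0,∞) × ℝ, and satisfies i ∂c/∂t (t,x) = - ∂²c/∂x² (t,x) + μ c(t,x) for all t > 0 and x ∈ ℝ. -/

import Mathlib

open MeasureTheory

noncomputable section

namespace FresnelSchrodingerAux

open Complex


def ph (t x v : ℝ) : ℂ := Complex.exp (Complex.I * ((x : ℂ) - (v : ℂ)) ^ 2 / (4 * (t : ℂ)))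

lemma norm_ph (t x v : ℝ) : ‖ph t x v‖ = 1 := by
  have h : Complex.I * ((x : ℂ) - (v : ℂ)) ^ 2 / (4 * (t : ℂ))
      = (((x - v) ^ 2 / (4 * t) : ℝ) : ℂ) * Complex.I := by push_cast; ring
  rw [ph, h, Complex.norm_exp_ofReal_mul_I]

lemma cont_ph (t u : ℝ) : Continuous fun v : ℝ => ph t u v := by
  unfold ph; fun_prop

lemma integ_ph (c₀ : SchwartzMap ℝ ℂ) (t x : ℝ) :
    Integrable (fun v : ℝ => ph t x v * c₀ v) := by
  refine c₀.integrable.bdd_mul (cont_ph t x).aestronglyMeasurable (c := 1) (Filter.Eventually.of_forall fun v => ?_)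
  exact le_of_eq (norm_ph t x v)

lemma integ_aux (c₀ : SchwartzMap ℝ ℂ) (a b d : ℝ) :
    Integrable (fun v : ℝ => (a + b * |v| + d * v ^ 2) * ‖c₀ v‖) := by
  have h0 : Integrable (fun v : ℝ => a * ‖c₀ v‖) := c₀.integrable.norm.const_mul a
  have h1 : Integrable (fun v : ℝ => b * (‖v‖ ^ 1 * ‖c₀ v‖)) :=
    (c₀.integrable_pow_mul volume 1).const_mul b
  have h2 : Integrable (fun v : ℝ => d * (‖v‖ ^ 2 * ‖c₀ v‖)) :=
    (c₀.integrable_pow_mul volume 2).const_mul d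
  have heq : (fun v : ℝ => (a + b * |v| + d * v ^ 2) * ‖c₀ v‖)
      = fun v => a * ‖c₀ v‖ + b * (‖v‖ ^ 1 * ‖c₀ v‖) + d * (‖v‖ ^ 2 * ‖c₀ v‖) := by
    funext v; rw [Real.norm_eq_abs, ← _root_.sq_abs v]; ring
  rw [heq]; exact (h0.add h1).add h2

lemma hasDerivAt_ofReal (x : ℝ) : HasDerivAt (fun u : ℝ => (u : ℂ)) 1 x := by
  simpa using (hasDerivAt_id x).ofReal_comp

lemma hasDerivAt_ph_x (t v : ℝ) (ht : t ≠ 0) (x : ℝ) :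
    HasDerivAt (fun u : ℝ => ph t u v)
      (Complex.I * ((x : ℂ) - v) / (2 * (t : ℂ)) * ph t x v) x := by
  have htc : (t : ℂ) ≠ 0 := by exact_mod_cast ht
  have h1 : HasDerivAt (fun u : ℝ => ((u : ℂ) - v) * ((u : ℂ) - v))
      (((x : ℂ) - v) + ((x : ℂ) - v)) x := by
    simpa using ((hasDerivAt_ofReal x).sub_const (v : ℂ)).fun_mul
      ((hasDerivAt_ofReal x).sub_const (v : ℂ))
  have h2 := (h1.const_mul (Complex.I / (4 * (t : ℂ)))).cexp
  have heq : (fun u : ℝ => ph t u v)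
      = fun u : ℝ => Complex.exp (Complex.I / (4 * (t : ℂ)) * (((u : ℂ) - v) * ((u : ℂ) - v))) := by
    funext u; rw [ph]; congr 1; ring
  rw [heq]
  convert h2 using 1
  rw [ph]
  have heq2 : Complex.I * ((x : ℂ) - v) ^ 2 / (4 * (t : ℂ))
      = Complex.I / (4 * (t : ℂ)) * (((x : ℂ) - v) * ((x : ℂ) - v)) := by ring
  rw [heq2]; field_simp; ring

lemma hasDerivAt_ph_t (x v : ℝ) (t : ℝ) (ht : t ≠ 0) :
    HasDerivAt (fun s : ℝ => ph s x v)
      (-(Complex.I * ((x : ℂ) - v) ^ 2) / (4 * (t : ℂ) ^ 2) * ph t x v) t := by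
  have htc : (t : ℂ) ≠ 0 := by exact_mod_cast ht
  have h1 : HasDerivAt (fun s : ℝ => ((s : ℂ))⁻¹) (-(((t : ℂ)) ^ 2)⁻¹) t :=
    (hasDerivAt_inv htc).comp_ofReal
  have h2 := (h1.const_mul (Complex.I * ((x : ℂ) - v) ^ 2 / 4)).cexp
  have heq : (fun s : ℝ => ph s x v)
      = fun s : ℝ => Complex.exp (Complex.I * ((x : ℂ) - v) ^ 2 / 4 * ((s : ℂ))⁻¹) := by
    funext s; rw [ph, div_eq_mul_inv, div_eq_mul_inv, mul_inv]; ring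
  rw [heq]
  convert h2 using 1
  rw [ph, div_eq_mul_inv, div_eq_mul_inv, mul_inv]
  field_simp

lemma norm_coeff1 (t u v : ℝ) : ‖Complex.I * ((u : ℂ) - v) / (2 * (t : ℂ))‖ = |u - v| / |2 * t| := by
  have h : Complex.I * ((u : ℂ) - v) / (2 * (t : ℂ)) = (((u - v) / (2 * t) : ℝ) : ℂ) * Complex.I := by
    push_cast; ring
  rw [h, norm_mul, Complex.norm_I, mul_one, Complex.norm_real, Real.norm_eq_abs, abs_div]

lemma L1 (c₀ : SchwartzMap ℝ ℂ) (t : ℝ) (ht : 0 < t) (x : ℝ) :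
    Integrable (fun v : ℝ => Complex.I * ((x : ℂ) - v) / (2 * (t : ℂ)) * ph t x v * c₀ v) ∧
    HasDerivAt (fun u : ℝ => ∫ v : ℝ, ph t u v * c₀ v)
      (∫ v : ℝ, Complex.I * ((x : ℂ) - v) / (2 * (t : ℂ)) * ph t x v * c₀ v) x := by
  have hb : Integrable (fun v : ℝ => (((|x| + 1) / (2 * t)) + (1 / (2 * t)) * |v| + 0 * v ^ 2) * ‖c₀ v‖) :=
    integ_aux c₀ _ _ _
  apply hasDerivAt_integral_of_dominated_loc_of_deriv_le (F := fun (u : ℝ) (v : ℝ) => ph t u v * c₀ v)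
      (F' := fun (u : ℝ) (v : ℝ) => Complex.I * ((u : ℂ) - v) / (2 * (t : ℂ)) * ph t u v * c₀ v)
      (bound := fun v => (((|x| + 1) / (2 * t)) + (1 / (2 * t)) * |v| + 0 * v ^ 2) * ‖c₀ v‖)
      (Metric.ball_mem_nhds x one_pos)
  · exact Filter.Eventually.of_forall fun u =>
      ((cont_ph t u).mul c₀.continuous).aestronglyMeasurable
  · exact integ_ph c₀ t x
  · apply Continuous.aestronglyMeasurable
    have := c₀.continuous
    unfold ph; fun_prop
  · refine Filter.Eventually.of_forall fun v u hu => ?_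
    rw [norm_mul, norm_mul, norm_ph, mul_one, norm_coeff1]
    have h1 : |u - v| ≤ (|x| + 1) + |v| := by
      have : |u| ≤ |x| + 1 := by
        have := abs_sub_abs_le_abs_sub u x
        have h2 : |u - x| ≤ 1 := le_of_lt (by simpa [Real.dist_eq] using hu)
        linarith
      calc |u - v| ≤ |u| + |v| := abs_sub _ _
        _ ≤ (|x| + 1) + |v| := by linarith
    have h2t : |2 * t| = 2 * t := abs_of_pos (by linarith)
    rw [h2t]
    have hrw : ((|x| + 1) / (2 * t) + 1 / (2 * t) * |v| + 0 * v ^ 2) * ‖c₀ v‖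
        = ((|x| + 1 + |v|) / (2 * t)) * ‖c₀ v‖ := by ring
    rw [hrw]
    gcongr
  · exact hb
  · refine Filter.Eventually.of_forall fun v u hu => ?_
    exact (hasDerivAt_ph_x t v ht.ne' u).mul_const (c₀ v)

lemma L2 (c₀ : SchwartzMap ℝ ℂ) (t : ℝ) (ht : 0 < t) (x : ℝ) :
    Integrable (fun v : ℝ =>
      (Complex.I / (2 * (t : ℂ)) + (Complex.I * ((x : ℂ) - v) / (2 * (t : ℂ))) ^ 2)
        * ph t x v * c₀ v) ∧
    HasDerivAt (fun u : ℝ => ∫ v : ℝ, Complex.I * ((u : ℂ) - v) / (2 * (t : ℂ)) * ph t u v * c₀ v)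
      (∫ v : ℝ, (Complex.I / (2 * (t : ℂ)) + (Complex.I * ((x : ℂ) - v) / (2 * (t : ℂ))) ^ 2)
        * ph t x v * c₀ v) x := by
  have hb : Integrable (fun v : ℝ =>
      ((1 / (2 * t) + (|x| + 1) ^ 2 / (4 * t ^ 2)) + (2 * (|x| + 1) / (4 * t ^ 2)) * |v|
        + (1 / (4 * t ^ 2)) * v ^ 2) * ‖c₀ v‖) := integ_aux c₀ _ _ _
  have hcont : ∀ u : ℝ, Continuous fun v : ℝ =>
      Complex.I * ((u : ℂ) - v) / (2 * (t : ℂ)) * ph t u v * c₀ v := by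
    intro u
    have := c₀.continuous
    unfold ph; fun_prop
  refine hasDerivAt_integral_of_dominated_loc_of_deriv_le
      (F := fun (u : ℝ) (v : ℝ) => Complex.I * ((u : ℂ) - v) / (2 * (t : ℂ)) * ph t u v * c₀ v)
      (F' := fun (u : ℝ) (v : ℝ) => (Complex.I / (2 * (t : ℂ)) + (Complex.I * ((u : ℂ) - v) / (2 * (t : ℂ))) ^ 2)
        * ph t u v * c₀ v)
      (bound := fun v : ℝ =>
        ((1 / (2 * t) + (|x| + 1) ^ 2 / (4 * t ^ 2)) + (2 * (|x| + 1) / (4 * t ^ 2)) * |v|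
          + (1 / (4 * t ^ 2)) * v ^ 2) * ‖c₀ v‖)
      (Metric.ball_mem_nhds x one_pos) ?_ ?_ ?_ ?_ ?_ ?_
  · exact Filter.Eventually.of_forall fun u => (hcont u).aestronglyMeasurable
  · exact (L1 c₀ t ht x).1
  · refine Continuous.aestronglyMeasurable ?_
    have := c₀.continuous
    unfold ph; fun_prop
  · refine Filter.Eventually.of_forall fun v u hu => ?_
    rw [norm_mul, norm_mul, norm_ph, mul_one]
    have h1 : |u - v| ≤ (|x| + 1) + |v| := by
      have h3 : |u| ≤ |x| + 1 := by
        have := abs_sub_abs_le_abs_sub u x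
        have h2 : |u - x| ≤ 1 := le_of_lt (by simpa [Real.dist_eq] using hu)
        linarith
      calc |u - v| ≤ |u| + |v| := abs_sub _ _
        _ ≤ (|x| + 1) + |v| := by linarith
    have hn1 : ‖Complex.I / (2 * (t : ℂ))‖ = 1 / (2 * t) := by
      have h : Complex.I / (2 * (t : ℂ)) = ((1 / (2 * t) : ℝ) : ℂ) * Complex.I := by
        push_cast; ring
      rw [h, norm_mul, Complex.norm_I, mul_one, Complex.norm_real, Real.norm_eq_abs,
        abs_of_pos (by positivity)]
    have hn2 : ‖(Complex.I * ((u : ℂ) - v) / (2 * (t : ℂ))) ^ 2‖ = (|u - v| / (2 * t)) ^ 2 := by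
      rw [norm_pow, norm_coeff1, abs_of_pos (show (0:ℝ) < 2 * t by linarith)]
    have hrw : ((1 / (2 * t) + (|x| + 1) ^ 2 / (4 * t ^ 2)) + (2 * (|x| + 1) / (4 * t ^ 2)) * |v|
          + (1 / (4 * t ^ 2)) * v ^ 2) * ‖c₀ v‖
        = (1 / (2 * t) + ((|x| + 1 + |v|) / (2 * t)) ^ 2) * ‖c₀ v‖ := by
      rw [← _root_.sq_abs v]; ring
    rw [hrw]
    have hsum : ‖Complex.I / (2 * (t : ℂ)) + (Complex.I * ((u : ℂ) - v) / (2 * (t : ℂ))) ^ 2‖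
        ≤ 1 / (2 * t) + ((|x| + 1 + |v|) / (2 * t)) ^ 2 := by
      refine (norm_add_le _ _).trans ?_
      rw [hn1, hn2]
      gcongr
    exact mul_le_mul_of_nonneg_right hsum (norm_nonneg _)
  · exact hb
  · refine Filter.Eventually.of_forall fun v u hu => ?_
    have ha : HasDerivAt (fun u : ℝ => Complex.I / (2 * (t : ℂ)) * ((u : ℂ) - v))
        (Complex.I / (2 * (t : ℂ)) * 1) u :=
      ((hasDerivAt_ofReal u).sub_const (v : ℂ)).const_mul _
    have hd := (ha.fun_mul (hasDerivAt_ph_x t v ht.ne' u)).mul_const (c₀ v)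
    convert hd using 1
    · rfl
    · funext w; ring
    · ring

lemma L3 (c₀ : SchwartzMap ℝ ℂ) (t : ℝ) (ht : 0 < t) (x : ℝ) :
    Integrable (fun v : ℝ =>
      -(Complex.I * ((x : ℂ) - v) ^ 2) / (4 * (t : ℂ) ^ 2) * ph t x v * c₀ v) ∧
    HasDerivAt (fun s : ℝ => ∫ v : ℝ, ph s x v * c₀ v)
      (∫ v : ℝ, -(Complex.I * ((x : ℂ) - v) ^ 2) / (4 * (t : ℂ) ^ 2) * ph t x v * c₀ v) t := by
  have hb : Integrable (fun v : ℝ =>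
      (x ^ 2 / t ^ 2 + (2 * |x| / t ^ 2) * |v| + (1 / t ^ 2) * v ^ 2) * ‖c₀ v‖) :=
    integ_aux c₀ _ _ _
  have hcont : ∀ s : ℝ, Continuous fun v : ℝ =>
      -(Complex.I * ((x : ℂ) - v) ^ 2) / (4 * (s : ℂ) ^ 2) * ph s x v * c₀ v := by
    intro s
    have := c₀.continuous
    unfold ph; fun_prop
  have hspos : ∀ s : ℝ, s ∈ Metric.ball t (t / 2) → t / 2 < s := by
    intro s hs
    have := abs_lt.1 (by simpa [Real.dist_eq] using hs)
    linarith [this.1]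
  refine hasDerivAt_integral_of_dominated_loc_of_deriv_le
      (F := fun (s : ℝ) (v : ℝ) => ph s x v * c₀ v)
      (F' := fun (s : ℝ) (v : ℝ) =>
        -(Complex.I * ((x : ℂ) - v) ^ 2) / (4 * (s : ℂ) ^ 2) * ph s x v * c₀ v)
      (bound := fun v : ℝ =>
        (x ^ 2 / t ^ 2 + (2 * |x| / t ^ 2) * |v| + (1 / t ^ 2) * v ^ 2) * ‖c₀ v‖)
      (Metric.ball_mem_nhds t (half_pos ht)) ?_ ?_ ?_ ?_ ?_ ?_
  · exact Filter.Eventually.of_forall fun s =>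
      ((cont_ph s x).mul c₀.continuous).aestronglyMeasurable
  · exact integ_ph c₀ t x
  · exact (hcont t).aestronglyMeasurable
  · refine Filter.Eventually.of_forall fun v s hs => ?_
    have hs2 : t / 2 < s := hspos s hs
    rw [norm_mul, norm_mul, norm_ph, mul_one]
    have hn : ‖-(Complex.I * ((x : ℂ) - v) ^ 2) / (4 * (s : ℂ) ^ 2)‖
        = (x - v) ^ 2 / (4 * s ^ 2) := by
      have h : -(Complex.I * ((x : ℂ) - v) ^ 2) / (4 * (s : ℂ) ^ 2)
          = ((-((x - v) ^ 2 / (4 * s ^ 2)) : ℝ) : ℂ) * Complex.I := by push_cast; ring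
      rw [h, norm_mul, Complex.norm_I, mul_one, Complex.norm_real, Real.norm_eq_abs]
      simp only [abs_neg]
      exact abs_of_nonneg (by positivity)
    rw [hn]
    have hrw : (x ^ 2 / t ^ 2 + (2 * |x| / t ^ 2) * |v| + (1 / t ^ 2) * v ^ 2) * ‖c₀ v‖
        = ((|x| + |v|) ^ 2 / t ^ 2) * ‖c₀ v‖ := by
      rw [← _root_.sq_abs x, ← _root_.sq_abs v]; ring
    rw [hrw]
    have hkey : (x - v) ^ 2 / (4 * s ^ 2) ≤ (|x| + |v|) ^ 2 / t ^ 2 := by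
      have h1 : (x - v) ^ 2 ≤ (|x| + |v|) ^ 2 := by
        rw [← _root_.sq_abs (x - v)]
        exact pow_le_pow_left₀ (abs_nonneg _) (abs_sub x v) 2
      have h2 : t ^ 2 ≤ 4 * s ^ 2 := by nlinarith
      exact div_le_div₀ (by positivity) h1 (by positivity) h2
    exact mul_le_mul_of_nonneg_right hkey (norm_nonneg _)
  · exact hb
  · refine Filter.Eventually.of_forall fun v s hs => ?_
    have hs2 : t / 2 < s := hspos s hs
    exact (hasDerivAt_ph_t x v s (by linarith)).mul_const (c₀ v)

def Amp (μ : ℝ) (s : ℝ) : ℂ :=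
  (4 * (Real.pi : ℂ) * Complex.I * (s : ℂ)) ^ (-(1/2 : ℂ)) *
    Complex.exp (-(Complex.I * (μ : ℂ) * (s : ℂ)))


lemma hasDerivAt_Amp (μ : ℝ) (t : ℝ) (ht : 0 < t) :
    HasDerivAt (Amp μ) (Amp μ t * (-(1 / (2 * (t : ℂ))) - Complex.I * (μ : ℂ))) t := by
  have htc : (t : ℂ) ≠ 0 := by exact_mod_cast ht.ne'
  have hπ : (Real.pi : ℂ) ≠ 0 := by exact_mod_cast Real.pi_ne_zero
  have hz : (4 * (Real.pi : ℂ) * Complex.I * (t : ℂ)) ≠ 0 := by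
    simp [Complex.I_ne_zero, hπ, htc]
  have h2 : HasDerivAt (fun s : ℝ => 4 * (Real.pi : ℂ) * Complex.I * (s : ℂ))
      (4 * (Real.pi : ℂ) * Complex.I) t := by
    simpa using (hasDerivAt_ofReal t).const_mul (4 * (Real.pi : ℂ) * Complex.I)
  have hslit : (4 * (Real.pi : ℂ) * Complex.I * (t : ℂ)) ∈ Complex.slitPlane := by
    refine Or.inr ?_
    have h : (4 * (Real.pi : ℂ) * Complex.I * (t : ℂ)) = ((4 * Real.pi * t : ℝ) : ℂ) * Complex.I := by
      push_cast; ring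
    rw [h]
    simp [Real.pi_ne_zero, ht.ne']
  have h3 : HasDerivAt (fun s : ℝ => (4 * (Real.pi : ℂ) * Complex.I * (s : ℂ)) ^ (-(1/2 : ℂ)))
      ((4 * (Real.pi : ℂ) * Complex.I) • (-(1/2 : ℂ) * (4 * (Real.pi : ℂ) * Complex.I * (t : ℂ)) ^ (-(1/2 : ℂ) - 1))) t :=
    HasDerivAt.scomp (g₁ := fun z : ℂ => z ^ (-(1/2 : ℂ))) t ((Complex.hasStrictDerivAt_cpow_const hslit).hasDerivAt) h2
  have h4 : HasDerivAt (fun s : ℝ => Complex.exp (-(Complex.I * (μ : ℂ) * (s : ℂ))))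
      (-(Complex.I * (μ : ℂ)) * Complex.exp (-(Complex.I * (μ : ℂ) * (t : ℂ)))) t := by
    have h5 := ((hasDerivAt_ofReal t).const_mul (-(Complex.I * (μ : ℂ)))).cexp
    have heq : (fun s : ℝ => Complex.exp (-(Complex.I * (μ : ℂ) * (s : ℂ))))
        = fun s : ℝ => Complex.exp (-(Complex.I * (μ : ℂ)) * (s : ℂ)) := by
      funext s; ring_nf
    rw [heq]
    convert h5 using 1; ring
  have h6 := h3.fun_mul h4
  have hsplit : (4 * (Real.pi : ℂ) * Complex.I * (t : ℂ)) ^ (-(1/2 : ℂ) - 1)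
      = (4 * (Real.pi : ℂ) * Complex.I * (t : ℂ)) ^ (-(1/2 : ℂ))
        * (4 * (Real.pi : ℂ) * Complex.I * (t : ℂ))⁻¹ := by
    rw [← Complex.cpow_neg_one, ← Complex.cpow_add _ _ hz]
    norm_num
  have heqA : Amp μ = fun s : ℝ => (4 * (Real.pi : ℂ) * Complex.I * (s : ℂ)) ^ (-(1/2 : ℂ)) *
      Complex.exp (-(Complex.I * (μ : ℂ) * (s : ℂ))) := rfl
  rw [heqA]
  convert h6 using 1
  rfl
  rw [hsplit]
  simp only [smul_eq_mul]
  field_simp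
  ring

end FresnelSchrodingerAux

open FresnelSchrodingerAux in
/-- The Fresnel-integral representation
`c(t,x) = (4πit)^{-1/2} e^{-iμt} ∫_ℝ e^{i(x-v)²/(4t)} c₀(v) dv`
(principal branch of the square root) of the solution of the free Schrödinger equation
with constant potential `μ`: for `t > 0` it is differentiable in `t`, twice differentiable
in `x`, and satisfies `i ∂c/∂t = -∂²c/∂x² + μ c`. -/
theorem fresnel_solves_free_schrodinger (μ : ℝ) (c₀ : SchwartzMap ℝ ℂ)
    (c : ℝ → ℝ → ℂ)
    (hc : ∀ t x : ℝ, c t x =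
      (4 * (Real.pi : ℂ) * Complex.I * (t : ℂ)) ^ (-(1/2 : ℂ)) *
        Complex.exp (-(Complex.I * (μ : ℂ) * (t : ℂ))) *
        ∫ v : ℝ, Complex.exp (Complex.I * ((x : ℂ) - (v : ℂ)) ^ 2 / (4 * (t : ℂ))) * c₀ v) :
    ∀ t : ℝ, 0 < t → ∀ x : ℝ,
      DifferentiableAt ℝ (fun s : ℝ => c s x) t ∧
      DifferentiableAt ℝ (fun u : ℝ => c t u) x ∧
      DifferentiableAt ℝ (deriv (fun u : ℝ => c t u)) x ∧
      Complex.I * deriv (fun s : ℝ => c s x) t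
        = -(deriv (deriv (fun u : ℝ => c t u)) x) + (μ : ℂ) * c t x := by
  intro t ht x
  have htc : (t : ℂ) ≠ 0 := by exact_mod_cast ht.ne'
  -- rewrite c in terms of Amp and ph
  have hc' : ∀ s u : ℝ, c s u = Amp μ s * ∫ v : ℝ, ph s u v * c₀ v := fun s u => hc s u
  -- time derivative
  have hdt : HasDerivAt (fun s : ℝ => c s x)
      (Amp μ t * (-(1 / (2 * (t : ℂ))) - Complex.I * (μ : ℂ)) * (∫ v : ℝ, ph t x v * c₀ v)
        + Amp μ t * ∫ v : ℝ, -(Complex.I * ((x : ℂ) - v) ^ 2) / (4 * (t : ℂ) ^ 2) * ph t x v * c₀ v) t := by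
    have heq : (fun s : ℝ => c s x) = fun s : ℝ => Amp μ s * ∫ v : ℝ, ph s x v * c₀ v :=
      funext fun s => hc' s x
    rw [heq]
    exact (hasDerivAt_Amp μ t ht).mul (L3 c₀ t ht x).2
  -- first space derivative, at every point
  have hdx : ∀ u : ℝ, HasDerivAt (fun u : ℝ => c t u)
      (Amp μ t * ∫ v : ℝ, Complex.I * ((u : ℂ) - v) / (2 * (t : ℂ)) * ph t u v * c₀ v) u := by
    intro u
    have heq : (fun u : ℝ => c t u) = fun u : ℝ => Amp μ t * ∫ v : ℝ, ph t u v * c₀ v :=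
      funext fun u => hc' t u
    rw [heq]
    exact ((L1 c₀ t ht u).2).const_mul (Amp μ t)
  have hderiv1 : deriv (fun u : ℝ => c t u)
      = fun u : ℝ => Amp μ t * ∫ v : ℝ, Complex.I * ((u : ℂ) - v) / (2 * (t : ℂ)) * ph t u v * c₀ v :=
    funext fun u => (hdx u).deriv
  have hdxx : HasDerivAt (deriv (fun u : ℝ => c t u))
      (Amp μ t * ∫ v : ℝ, (Complex.I / (2 * (t : ℂ))
        + (Complex.I * ((x : ℂ) - v) / (2 * (t : ℂ))) ^ 2) * ph t x v * c₀ v) x := by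
    rw [hderiv1]
    exact ((L2 c₀ t ht x).2).const_mul (Amp μ t)
  refine ⟨hdt.differentiableAt, (hdx x).differentiableAt, hdxx.differentiableAt, ?_⟩
  rw [hdt.deriv, hdxx.deriv, hc' t x]
  -- split the second-derivative integral
  have hsplit : (fun v : ℝ => (Complex.I / (2 * (t : ℂ))
        + (Complex.I * ((x : ℂ) - v) / (2 * (t : ℂ))) ^ 2) * ph t x v * c₀ v)
      = fun v : ℝ => Complex.I / (2 * (t : ℂ)) * (ph t x v * c₀ v)
        + (-Complex.I) * (-(Complex.I * ((x : ℂ) - v) ^ 2) / (4 * (t : ℂ) ^ 2) * ph t x v * c₀ v) := by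
    funext v
    field_simp
    ring
  have hi1 : Integrable (fun v : ℝ => Complex.I / (2 * (t : ℂ)) * (ph t x v * c₀ v)) :=
    (integ_ph c₀ t x).const_mul _
  have hi2 : Integrable (fun v : ℝ =>
      (-Complex.I) * (-(Complex.I * ((x : ℂ) - v) ^ 2) / (4 * (t : ℂ) ^ 2) * ph t x v * c₀ v)) :=
    (L3 c₀ t ht x).1.const_mul _
  have hIsplit : (∫ v : ℝ, (Complex.I / (2 * (t : ℂ))
        + (Complex.I * ((x : ℂ) - v) / (2 * (t : ℂ))) ^ 2) * ph t x v * c₀ v)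
      = Complex.I / (2 * (t : ℂ)) * (∫ v : ℝ, ph t x v * c₀ v)
        + (-Complex.I) * ∫ v : ℝ, -(Complex.I * ((x : ℂ) - v) ^ 2) / (4 * (t : ℂ) ^ 2) * ph t x v * c₀ v := by
    rw [hsplit, integral_add hi1 hi2, MeasureTheory.integral_const_mul, MeasureTheory.integral_const_mul]
  rw [hIsplit]
  set g := ∫ v : ℝ, ph t x v * c₀ v
  set G := ∫ v : ℝ, -(Complex.I * ((x : ℂ) - v) ^ 2) / (4 * (t : ℂ) ^ 2) * ph t x v * c₀ v
  have hI2 : Complex.I ^ 2 = -1 := Complex.I_sq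
  linear_combination (-(μ : ℂ) * Amp μ t * g) * hI2

end
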